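/- arXiv:1811.04204 — 3 statements merged into one kernel-verified Lean document; each statement's English description precedes it below -/
import Mathlib

section
/- Let n ≥ 2 and let u : EuclideanSpace ℝ (Fin n) → ℝ be twice continuously differentiable and harmonic on an open set Ω, with ∇u(p) ≠ 0 for all p ∈ Ω. Let φ : ℝ → EuclideanSpace ℝ (Fin n) be a unit-speed gradient flow line: φ maps an interval [0, L] into Ω, and for every s ∈ [0, L], φ'(s) = N(φ(s)) where N(p) = ∇u(p)/‖∇u(p)‖. Then for every s ∈ [0, L], ‖∇u(φ(s))‖ = ‖∇u(φ(0))‖ · exp((n − 1) ∫₀ˢ H(φ(t)) dt), where H(p) = (Q(p)(N(p), N(p)) − Δu(p)) / ((n − 1)‖∇u(p)‖) is the mean curvature of the level hypersurface of u through p. -/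
open Set

/-- The Hessian bilinear form of `u` at `p`, applied to `(v, w)`:
the second Fréchet derivative. -/
noncomputable def hessianForm {n : ℕ} (u : EuclideanSpace ℝ (Fin n) → ℝ)
    (p v w : EuclideanSpace ℝ (Fin n)) : ℝ :=
  fderiv ℝ (fderiv ℝ u) p v w

/-- The Laplacian of `u` at `p`: the trace of the Hessian. -/
noncomputable def laplacianAt {n : ℕ} (u : EuclideanSpace ℝ (Fin n) → ℝ)
    (p : EuclideanSpace ℝ (Fin n)) : ℝ :=
  ∑ i, hessianForm u p (EuclideanSpace.single i 1) (EuclideanSpace.single i 1)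

/-- The unit normal `N(p) = ∇u(p)/‖∇u(p)‖` to the level hypersurface of `u` through `p`. -/
noncomputable def unitNormal {n : ℕ} (u : EuclideanSpace ℝ (Fin n) → ℝ)
    (p : EuclideanSpace ℝ (Fin n)) : EuclideanSpace ℝ (Fin n) :=
  ‖gradient u p‖⁻¹ • gradient u p

/-- The mean curvature `H(p)` of the level hypersurface of `u` through `p`, oriented by `N`. -/
noncomputable def meanCurvature {n : ℕ} (u : EuclideanSpace ℝ (Fin n) → ℝ)
    (p : EuclideanSpace ℝ (Fin n)) : ℝ :=
  (hessianForm u p (unitNormal u p) (unitNormal u p) - laplacianAt u p) /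
    (((n : ℝ) - 1) * ‖gradient u p‖)

theorem gradient_norm_eq_exp_integral_meanCurvature
    (n : ℕ) (hn : 2 ≤ n)
    (u : EuclideanSpace ℝ (Fin n) → ℝ)
    (Ω : Set (EuclideanSpace ℝ (Fin n))) (hΩ : IsOpen Ω)
    (hu : ContDiffOn ℝ 2 u Ω)
    (hharm : ∀ p ∈ Ω, laplacianAt u p = 0)
    (hgrad : ∀ p ∈ Ω, gradient u p ≠ 0)
    (φ : ℝ → EuclideanSpace ℝ (Fin n)) (L : ℝ)
    (hmap : ∀ s ∈ Icc (0 : ℝ) L, φ s ∈ Ω)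
    (hflow : ∀ s ∈ Icc (0 : ℝ) L, HasDerivAt φ (unitNormal u (φ s)) s)
    (s : ℝ) (hs : s ∈ Icc (0 : ℝ) L) :
    ‖gradient u (φ s)‖ = ‖gradient u (φ 0)‖ *
      Real.exp (((n : ℝ) - 1) * ∫ t in (0 : ℝ)..s, meanCurvature u (φ t)) := by
  have hn1 : ((n : ℝ) - 1) ≠ 0 := by
    have h2 : (2 : ℝ) ≤ (n : ℝ) := by exact_mod_cast hn
    linarith
  set e := (InnerProductSpace.toDual ℝ (EuclideanSpace ℝ (Fin n))).symm with he
  have hfd1 : ContDiffOn ℝ 1 (fderiv ℝ u) Ω := hu.fderiv_of_isOpen hΩ (by norm_num)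
  have hfdc : ContinuousOn (fderiv ℝ u) Ω := hfd1.continuousOn
  have hfd2c : ContinuousOn (fderiv ℝ (fderiv ℝ u)) Ω :=
    hfd1.continuousOn_fderiv_of_isOpen hΩ le_rfl
  have hgradc : ∀ p ∈ Ω, ContinuousAt (gradient u) p := by
    intro p hp
    have h1 : ContinuousOn (fun q => e (fderiv ℝ u q)) Ω :=
      e.continuous.comp_continuousOn hfdc
    exact (h1.continuousAt (hΩ.mem_nhds hp) : _)
  set k : ℝ → ℝ := fun r => ((n : ℝ) - 1) * meanCurvature u (φ r) with hkdef
  -- the key derivative computation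
  have key : ∀ t ∈ Icc (0:ℝ) L,
      HasDerivAt (fun r => ‖gradient u (φ r)‖) (k t * ‖gradient u (φ t)‖) t := by
    intro t ht
    have hp : φ t ∈ Ω := hmap t ht
    have hg0 : gradient u (φ t) ≠ 0 := hgrad _ hp
    have hgnorm : ‖gradient u (φ t)‖ ≠ 0 := norm_ne_zero_iff.mpr hg0
    have hφ : HasDerivAt φ (unitNormal u (φ t)) t := hflow t ht
    have hB : HasFDerivAt (fderiv ℝ u) (fderiv ℝ (fderiv ℝ u) (φ t)) (φ t) :=
      ((hfd1.differentiableOn one_ne_zero).differentiableAt (hΩ.mem_nhds hp)).hasFDerivAt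
    have hcomp : HasDerivAt (fun r => fderiv ℝ u (φ r))
        (fderiv ℝ (fderiv ℝ u) (φ t) (unitNormal u (φ t))) t := hB.comp_hasDerivAt t hφ
    have hG : HasDerivAt (fun r => gradient u (φ r))
        (e (fderiv ℝ (fderiv ℝ u) (φ t) (unitNormal u (φ t)))) t := by
      have h2 := (e.toContinuousLinearEquiv.hasFDerivAt
        (x := fderiv ℝ u (φ t))).comp_hasDerivAt t hcomp
      exact h2
    set g := gradient u (φ t) with hgdef
    set N := unitNormal u (φ t) with hNdef
    set v := e (fderiv ℝ (fderiv ℝ u) (φ t) N) with hvdef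
    have hinner : HasDerivAt
        (fun r => (inner ℝ (gradient u (φ r)) (gradient u (φ r)) : ℝ))
        ((inner ℝ g v : ℝ) + (inner ℝ v g : ℝ)) t := HasDerivAt.inner ℝ hG hG
    have hvg : (inner ℝ v g : ℝ) = ‖g‖ * hessianForm u (φ t) N N := by
      have h1 : (inner ℝ v g : ℝ) = fderiv ℝ (fderiv ℝ u) (φ t) N g :=
        InnerProductSpace.toDual_symm_apply
    -- g = ‖g‖ • N
      have h2 : g = ‖g‖ • N := by
        rw [hNdef]
        show g = ‖g‖ • (‖gradient u (φ t)‖⁻¹ • gradient u (φ t))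
        rw [← hgdef, smul_smul, mul_inv_cancel₀ hgnorm, one_smul]
      rw [h1]
      conv_lhs => rw [h2]
      rw [map_smul]
      simp [hessianForm, smul_eq_mul]
    have hgv : (inner ℝ g v : ℝ) = ‖g‖ * hessianForm u (φ t) N N := by
      rw [real_inner_comm]; exact hvg
    have hself : (inner ℝ g g : ℝ) ≠ 0 := by
      rw [real_inner_self_eq_norm_mul_norm]
      exact mul_ne_zero hgnorm hgnorm
    have hsq : HasDerivAt (fun r => Real.sqrt
          (inner ℝ (gradient u (φ r)) (gradient u (φ r)) : ℝ))
        (((inner ℝ g v : ℝ) + (inner ℝ v g : ℝ)) / (2 * Real.sqrt (inner ℝ g g : ℝ))) t :=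
      hinner.sqrt hself
    have hfun : (fun r => Real.sqrt (inner ℝ (gradient u (φ r)) (gradient u (φ r)) : ℝ))
        = fun r => ‖gradient u (φ r)‖ := by
      funext r
      rw [real_inner_self_eq_norm_mul_norm, Real.sqrt_mul_self (norm_nonneg _)]
    rw [hfun] at hsq
    convert hsq using 1
    rw [hgv, hvg, real_inner_self_eq_norm_mul_norm, Real.sqrt_mul_self (norm_nonneg _)]
    rw [hkdef]
    simp only [meanCurvature, hharm _ hp, ← hgdef, ← hNdef, sub_zero]
    field_simp
    ring
  -- continuity of k on the interval
  have hkc : ∀ t ∈ Icc (0:ℝ) L, ContinuousAt k t := by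
    intro t ht
    have hp : φ t ∈ Ω := hmap t ht
    have hg0 : gradient u (φ t) ≠ 0 := hgrad _ hp
    have hgnorm : ‖gradient u (φ t)‖ ≠ 0 := norm_ne_zero_iff.mpr hg0
    have hφc : ContinuousAt φ t := (hflow t ht).continuousAt
    have hgcc : ContinuousAt (fun r => gradient u (φ r)) t := (hgradc _ hp).comp hφc
    have hnormc : ContinuousAt (fun r => ‖gradient u (φ r)‖) t := hgcc.norm
    have hNc : ContinuousAt (fun r => unitNormal u (φ r)) t := by
      have h1 := (hnormc.inv₀ hgnorm).smul hgcc
      exact h1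
    have hBc : ContinuousAt (fun r => fderiv ℝ (fderiv ℝ u) (φ r)) t :=
      (hfd2c.continuousAt (hΩ.mem_nhds hp)).comp hφc
    have happ : ∀ {F : Type} [NormedAddCommGroup F] [NormedSpace ℝ F]
        (A : ℝ → (EuclideanSpace ℝ (Fin n) →L[ℝ] F)) (V : ℝ → EuclideanSpace ℝ (Fin n)),
        ContinuousAt A t → ContinuousAt V t → ContinuousAt (fun r => A r (V r)) t := by
      intro F _ _ A V hA hV
      exact (isBoundedBilinearMap_apply.continuous.continuousAt.comp (hA.prodMk hV) : _)
    have hQ1 : ContinuousAt (fun r => fderiv ℝ (fderiv ℝ u) (φ r) (unitNormal u (φ r))) t :=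
      happ _ _ hBc hNc
    have hQc : ContinuousAt (fun r =>
        hessianForm u (φ r) (unitNormal u (φ r)) (unitNormal u (φ r))) t := by
      simp only [hessianForm]
      exact happ _ _ hQ1 hNc
    have hLc : ContinuousAt (fun r => laplacianAt u (φ r)) t := by
      simp only [laplacianAt, hessianForm]
      exact tendsto_finset_sum _ fun i _ =>
        happ _ _ (happ _ _ hBc continuousAt_const) continuousAt_const
    have hdiv : ContinuousAt (fun r =>
        (hessianForm u (φ r) (unitNormal u (φ r)) (unitNormal u (φ r)) - laplacianAt u (φ r)) /
          (((n : ℝ) - 1) * ‖gradient u (φ r)‖)) t :=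
      (hQc.sub hLc).div (continuousAt_const.mul hnormc) (mul_ne_zero hn1 hgnorm)
    rw [hkdef]
    simp only [meanCurvature]
    exact continuousAt_const.mul hdiv
  have hkC : ContinuousOn k (Icc 0 L) := fun t ht => (hkc t ht).continuousWithinAt
  -- integral and its derivative
  have hint : ∀ r ∈ Icc (0:ℝ) L, IntervalIntegrable k MeasureTheory.volume 0 r := by
    intro r hr
    apply (hkC.mono ?_).intervalIntegrable
    rw [uIcc_of_le hr.1]
    exact Icc_subset_Icc le_rfl hr.2
  have hI : ∀ r ∈ Icc (0:ℝ) L,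
      HasDerivWithinAt (fun x => ∫ t in (0:ℝ)..x, k t) (k r) (Icc 0 L) r := by
    intro r hr
    haveI : Fact (r ∈ Icc (0:ℝ) L) := ⟨hr⟩
    exact intervalIntegral.integral_hasDerivWithinAt_right (hint r hr)
      (hkC.stronglyMeasurableAtFilter_nhdsWithin measurableSet_Icc r)
      ((hkc r hr).continuousWithinAt)
  set I : ℝ → ℝ := fun x => ∫ t in (0:ℝ)..x, k t with hIdef
  set F : ℝ → ℝ := fun r => ‖gradient u (φ r)‖ * Real.exp (-(I r)) with hFdef
  have hF : ∀ r ∈ Icc (0:ℝ) L, HasDerivWithinAt F 0 (Icc 0 L) r := by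
    intro r hr
    have h1 := ((key r hr).hasDerivWithinAt (s := Icc 0 L)).mul (((hI r hr).neg).exp)
    refine h1.congr_deriv ?_
    ring
  have hFc : ∀ r ∈ Icc (0:ℝ) L, F r = F 0 :=
    constant_of_has_deriv_right_zero
      (fun x hx => (hF x hx).continuousWithinAt)
      (fun x hx => (hF x (mem_Icc_of_Ico hx)).mono_of_mem_nhdsWithin
        (Icc_mem_nhdsGE_of_mem hx))
  have hFs := hFc s hs
  have hI0 : I 0 = 0 := intervalIntegral.integral_same
  rw [hFdef] at hFs
  simp only [hI0, neg_zero, Real.exp_zero, mul_one] at hFs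
  have hIs : I s = ((n : ℝ) - 1) * ∫ t in (0:ℝ)..s, meanCurvature u (φ t) := by
    rw [hIdef]
    simp only [hkdef]
    exact intervalIntegral.integral_const_mul _ _
  calc ‖gradient u (φ s)‖
      = ‖gradient u (φ s)‖ * Real.exp (-(I s)) * Real.exp (I s) := by
        rw [mul_assoc, ← Real.exp_add, neg_add_cancel, Real.exp_zero, mul_one]
    _ = ‖gradient u (φ 0)‖ * Real.exp (I s) := by rw [hFs]
    _ = _ := by rw [hIs]
end

section
/- Let n ≥ 2 and let u : EuclideanSpace ℝ (Fin n) → ℝ be twice continuously differentiable and harmonic on an open set Ω, with ∇u(p) ≠ 0 for all p ∈ Ω. Let φ map an interval [0, L] into Ω and satisfy φ'(s) = N(φ(s)) for all s ∈ [0, L], where N(p) = ∇u(p)/‖∇u(p)‖. Then the function s ↦ log ‖∇u(φ(s))‖ is differentiable on [0, L] and its derivative at s equals (n − 1) · H(φ(s)), where H(p) = (Q(p)(N(p), N(p)) − Δu(p)) / ((n − 1)‖∇u(p)‖). -/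
open Set

/-- Over `ℝ`, the inverse of `InnerProductSpace.toDual` as a genuinely `ℝ`-linear
isometry equivalence (the conjugation is trivial). -/
noncomputable def dualIsoReal (n : ℕ) :
    StrongDual ℝ (EuclideanSpace ℝ (Fin n)) ≃ₗᵢ[ℝ] EuclideanSpace ℝ (Fin n) where
  toFun y := (InnerProductSpace.toDual ℝ _).symm y
  invFun x := InnerProductSpace.toDual ℝ _ x
  map_add' x y := map_add _ x y
  map_smul' c y := by
    simp [(InnerProductSpace.toDual ℝ (EuclideanSpace ℝ (Fin n))).symm.map_smul c y]
  left_inv y := (InnerProductSpace.toDual ℝ _).apply_symm_apply y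
  right_inv x := (InnerProductSpace.toDual ℝ _).symm_apply_apply x
  norm_map' y := (InnerProductSpace.toDual ℝ _).symm.norm_map y

theorem hasDerivAt_log_norm_gradient_eq_meanCurvature
    (n : ℕ) (hn : 2 ≤ n)
    (u : EuclideanSpace ℝ (Fin n) → ℝ)
    (Ω : Set (EuclideanSpace ℝ (Fin n))) (hΩ : IsOpen Ω)
    (hu : ContDiffOn ℝ 2 u Ω)
    (hharm : ∀ p ∈ Ω, laplacianAt u p = 0)
    (hgrad : ∀ p ∈ Ω, gradient u p ≠ 0)
    (φ : ℝ → EuclideanSpace ℝ (Fin n)) (L : ℝ)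
    (hmap : ∀ s ∈ Icc (0 : ℝ) L, φ s ∈ Ω)
    (hflow : ∀ s ∈ Icc (0 : ℝ) L, HasDerivAt φ (unitNormal u (φ s)) s) :
    ∀ s ∈ Icc (0 : ℝ) L,
      HasDerivAt (fun t => Real.log ‖gradient u (φ t)‖)
        (((n : ℝ) - 1) * meanCurvature u (φ s)) s := by
  intro s hs
  set p := φ s with hp
  have hpΩ : p ∈ Ω := hmap s hs
  have hG : gradient u p ≠ 0 := hgrad p hpΩ
  have hGn : ‖gradient u p‖ ≠ 0 := norm_ne_zero_iff.2 hG
  have hcd : ContDiffAt ℝ 2 u p := hu.contDiffAt (hΩ.mem_nhds hpΩ)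
  have h1 : ContDiffAt ℝ 1 (fderiv ℝ u) p := hcd.fderiv_right (by norm_num)
  have hdiff : DifferentiableAt ℝ (fderiv ℝ u) p := h1.differentiableAt one_ne_zero
  set e := dualIsoReal n with he
  set Q := fderiv ℝ (fderiv ℝ u) p with hQ
  have hgradF : HasFDerivAt (gradient u)
      ((e : _ →L[ℝ] _).comp Q) p := by
    have heq : gradient u = e ∘ (fderiv ℝ u) := rfl
    rw [heq]
    exact e.comp_hasFDerivAt_iff.2 hdiff.hasFDerivAt
  set v := unitNormal u p with hv
  have hg : HasDerivAt (fun t => gradient u (φ t)) (e (Q v)) s := by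
    exact hgradF.comp_hasDerivAt s (hflow s hs)
  have hinner : HasDerivAt
      (fun t => (inner ℝ (gradient u (φ t)) (gradient u (φ t)) : ℝ))
      (inner ℝ (gradient u p) (e (Q v)) + inner ℝ (e (Q v)) (gradient u p)) s :=
    hg.inner ℝ hg
  have hne : (inner ℝ (gradient u p) (gradient u p) : ℝ) ≠ 0 := by
    rw [real_inner_self_eq_norm_sq]
    exact pow_ne_zero 2 hGn
  have hlog := (hinner.log hne).const_mul (1 / 2 : ℝ)
  have hfun : (fun t => (1 / 2 : ℝ) *
      Real.log (inner ℝ (gradient u (φ t)) (gradient u (φ t)) : ℝ)) =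
      fun t => Real.log ‖gradient u (φ t)‖ := by
    funext t
    rw [real_inner_self_eq_norm_sq, Real.log_pow]
    push_cast
    ring
  rw [hfun] at hlog
  convert hlog using 1
  case e'_4 => rfl
  case e'_5 => rfl
  -- value computation
  have hiQ : (inner ℝ (e (Q v)) (gradient u p) : ℝ) = Q v (gradient u p) := by
    exact InnerProductSpace.toDual_symm_apply
  have hGv : gradient u p = ‖gradient u p‖ • v := by
    rw [hv, unitNormal, smul_smul, mul_inv_cancel₀ hGn, one_smul]
  have hQvG : Q v (gradient u p) = ‖gradient u p‖ * Q v v := by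
    conv_lhs => rw [hGv]
    rw [map_smul]
    rfl
  have hsym : (inner ℝ (gradient u p) (e (Q v)) : ℝ) = Q v (gradient u p) := by
    rw [real_inner_comm]; exact hiQ
  have hH : hessianForm u p v v = Q v v := rfl
  rw [meanCurvature, hharm p hpΩ, hiQ, hsym, hQvG, real_inner_self_eq_norm_sq, ← hv, hH]
  have hn1 : ((n : ℝ) - 1) ≠ 0 := by
    have : (2 : ℝ) ≤ (n : ℝ) := by exact_mod_cast hn
    linarith
  rw [← hp]
  field_simp
  ring
end

section
/- Let n ≥ 2 and let u : EuclideanSpace ℝ (Fin n) → ℝ be twice continuously differentiable on an open set Ω with ∇u(p) ≠ 0 for all p ∈ Ω, and set N(p) = ∇u(p)/‖∇u(p)‖. Let φ map an interval [0, L] into Ω and satisfy φ'(s) = N(φ(s)) for all s ∈ [0, L]. Then for every s ∈ [0, L], ‖∇u(φ(s))‖ = ‖∇u(φ(0))‖ · exp(∫₀ˢ Q(φ(t))(N(φ(t)), N(φ(t))) / ‖∇u(φ(t))‖ dt), where Q(p) is the Hessian bilinear form of u at p. (Harmonicity of u is not needed for this identity.) -/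
open Set

theorem gradient_norm_eq_exp_integral_hessian
    (n : ℕ) (hn : 2 ≤ n)
    (u : EuclideanSpace ℝ (Fin n) → ℝ)
    (Ω : Set (EuclideanSpace ℝ (Fin n))) (hΩ : IsOpen Ω)
    (hu : ContDiffOn ℝ 2 u Ω)
    (hgrad : ∀ p ∈ Ω, gradient u p ≠ 0)
    (φ : ℝ → EuclideanSpace ℝ (Fin n)) (L : ℝ)
    (hmap : ∀ s ∈ Icc (0 : ℝ) L, φ s ∈ Ω)
    (hflow : ∀ s ∈ Icc (0 : ℝ) L, HasDerivAt φ (unitNormal u (φ s)) s)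
    (s : ℝ) (hs : s ∈ Icc (0 : ℝ) L) :
    ‖gradient u (φ s)‖ = ‖gradient u (φ 0)‖ *
      Real.exp (∫ t in (0 : ℝ)..s,
        hessianForm u (φ t) (unitNormal u (φ t)) (unitNormal u (φ t)) /
          ‖gradient u (φ t)‖) := by
  set LL : StrongDual ℝ (EuclideanSpace ℝ (Fin n)) →L[ℝ] EuclideanSpace ℝ (Fin n) :=
    ((InnerProductSpace.toDual ℝ (EuclideanSpace ℝ (Fin n))).symm.toContinuousLinearEquiv :
      StrongDual ℝ (EuclideanSpace ℝ (Fin n)) ≃L[ℝ] EuclideanSpace ℝ (Fin n)).toContinuousLinearMap with hLL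
  have hLLapp : ∀ l : StrongDual ℝ (EuclideanSpace ℝ (Fin n)),
      LL l = (InnerProductSpace.toDual ℝ (EuclideanSpace ℝ (Fin n))).symm l :=
    fun l => rfl
  have hgradeq : gradient u = fun x => LL (fderiv ℝ u x) := by
    funext x; rfl
  -- the key derivative computation
  have main : ∀ t ∈ Icc (0 : ℝ) L,
      HasDerivAt (fun s => Real.log ‖gradient u (φ s)‖)
        (hessianForm u (φ t) (unitNormal u (φ t)) (unitNormal u (φ t)) /
          ‖gradient u (φ t)‖) t := by
    intro t ht
    set p := φ t with hp
    have hpΩ : p ∈ Ω := hmap t ht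
    have hg0 : gradient u p ≠ 0 := hgrad p hpΩ
    have ha : (0 : ℝ) < ‖gradient u p‖ := norm_pos_iff.mpr hg0
    have hca : ContDiffAt ℝ 2 u p := hu.contDiffAt (hΩ.mem_nhds hpΩ)
    have h1 : ContDiffAt ℝ 1 (fderiv ℝ u) p := hca.fderiv_right (by norm_num)
    have hB : HasFDerivAt (fderiv ℝ u) (fderiv ℝ (fderiv ℝ u) p) p :=
      (h1.differentiableAt one_ne_zero).hasFDerivAt
    have hGd : HasFDerivAt (gradient u) (LL.comp (fderiv ℝ (fderiv ℝ u) p)) p := by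
      rw [hgradeq]
      exact LL.hasFDerivAt.comp p hB
    have hcomp : HasDerivAt (fun s => gradient u (φ s))
        ((LL.comp (fderiv ℝ (fderiv ℝ u) p)) (unitNormal u p)) t :=
      hGd.comp_hasDerivAt t (hflow t ht)
    set v := (LL.comp (fderiv ℝ (fderiv ℝ u) p)) (unitNormal u p) with hv
    have hinner : HasDerivAt (fun s => (inner ℝ (gradient u (φ s)) (gradient u (φ s)) : ℝ))
        ((inner ℝ (gradient u p) v : ℝ) + inner ℝ v (gradient u p)) t :=
      HasDerivAt.inner ℝ hcomp hcomp
    have hvg : (inner ℝ v (gradient u p) : ℝ) =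
        ‖gradient u p‖ * hessianForm u p (unitNormal u p) (unitNormal u p) := by
      have : (inner ℝ v (gradient u p) : ℝ) =
          fderiv ℝ (fderiv ℝ u) p (unitNormal u p) (gradient u p) := by
        rw [hv, ContinuousLinearMap.comp_apply, hLLapp, InnerProductSpace.toDual_symm_apply]
      rw [this]
      have hgN : gradient u p = ‖gradient u p‖ • unitNormal u p := by
        rw [unitNormal, smul_smul, mul_inv_cancel₀ (ne_of_gt ha), one_smul]
      conv_lhs => rw [hgN]
      rw [map_smul]
      rfl
    have hgv : (inner ℝ (gradient u p) v : ℝ) = inner ℝ v (gradient u p) := real_inner_comm _ _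
    set Q := hessianForm u p (unitNormal u p) (unitNormal u p) with hQ
    have hii : (inner ℝ (gradient u p) (gradient u p) : ℝ) = ‖gradient u p‖ ^ 2 :=
      real_inner_self_eq_norm_sq _
    have hiine : (inner ℝ (gradient u p) (gradient u p) : ℝ) ≠ 0 := by
      rw [hii]; positivity
    have hsq : HasDerivAt (fun s => Real.sqrt
        ((inner ℝ (gradient u (φ s)) (gradient u (φ s)) : ℝ)))
        ((1 / (2 * Real.sqrt (inner ℝ (gradient u p) (gradient u p) : ℝ))) *
          ((inner ℝ (gradient u p) v : ℝ) + inner ℝ v (gradient u p))) t :=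
      (Real.hasDerivAt_sqrt hiine).comp t hinner
    have hfun : (fun s => Real.sqrt ((inner ℝ (gradient u (φ s)) (gradient u (φ s)) : ℝ))) =
        fun s => ‖gradient u (φ s)‖ := by
      funext x
      rw [real_inner_self_eq_norm_sq, Real.sqrt_sq (norm_nonneg _)]
    have hsqrtval : Real.sqrt (inner ℝ (gradient u p) (gradient u p) : ℝ) = ‖gradient u p‖ := by
      rw [hii, Real.sqrt_sq (norm_nonneg _)]
    have hderval : (1 / (2 * Real.sqrt (inner ℝ (gradient u p) (gradient u p) : ℝ))) *
          ((inner ℝ (gradient u p) v : ℝ) + inner ℝ v (gradient u p)) = Q := by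
      rw [hsqrtval, hgv, hvg]
      field_simp
      ring
    rw [hfun, hderval] at hsq
    have hft : ‖gradient u (φ t)‖ ≠ 0 := ne_of_gt ha
    exact hsq.log hft
  -- continuity of the integrand
  have hφc : ContinuousOn φ (Icc 0 L) :=
    fun t ht => ((hflow t ht).continuousAt).continuousWithinAt
  have hGc : ContinuousOn (gradient u) Ω := by
    rw [hgradeq]
    exact LL.continuous.comp_continuousOn
      (hu.continuousOn_fderiv_of_isOpen hΩ (by norm_num))
  have hGφ : ContinuousOn (fun t => gradient u (φ t)) (Icc 0 L) := hGc.comp hφc hmap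
  have hnormc : ContinuousOn (fun t => ‖gradient u (φ t)‖) (Icc 0 L) := hGφ.norm
  have hnne : ∀ t ∈ Icc (0 : ℝ) L, ‖gradient u (φ t)‖ ≠ 0 :=
    fun t ht => ne_of_gt (norm_pos_iff.mpr (hgrad _ (hmap t ht)))
  have hNc : ContinuousOn (fun t => unitNormal u (φ t)) (Icc 0 L) := by
    simp only [unitNormal]
    exact (hnormc.inv₀ hnne).smul hGφ
  have hHc : ContinuousOn (fderiv ℝ (fderiv ℝ u)) Ω :=
    (hu.fderiv_of_isOpen hΩ (by norm_num)).continuousOn_fderiv_of_isOpen hΩ le_rfl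
  have hq0 : ContinuousOn (fun t => hessianForm u (φ t) (unitNormal u (φ t))
      (unitNormal u (φ t))) (Icc 0 L) := by
    simp only [hessianForm]
    exact (((hHc.comp hφc hmap).clm_apply hNc).clm_apply hNc)
  have hqc : ContinuousOn (fun t => hessianForm u (φ t) (unitNormal u (φ t))
      (unitNormal u (φ t)) / ‖gradient u (φ t)‖) (Icc 0 L) :=
    hq0.div hnormc hnne
  -- apply FTC
  have huIcc : uIcc (0 : ℝ) s = Icc 0 s := uIcc_of_le hs.1
  have hsub : Icc (0 : ℝ) s ⊆ Icc 0 L := Icc_subset_Icc le_rfl hs.2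
  have key : (∫ t in (0 : ℝ)..s,
      hessianForm u (φ t) (unitNormal u (φ t)) (unitNormal u (φ t)) /
        ‖gradient u (φ t)‖) =
      Real.log ‖gradient u (φ s)‖ - Real.log ‖gradient u (φ 0)‖ := by
    apply intervalIntegral.integral_eq_sub_of_hasDerivAt
    · intro t ht
      exact main t (hsub (huIcc ▸ ht))
    · apply ContinuousOn.intervalIntegrable
      rw [huIcc]
      exact hqc.mono hsub
  rw [key, Real.exp_sub,
    Real.exp_log (norm_pos_iff.mpr (hgrad _ (hmap s hs))),
    Real.exp_log (norm_pos_iff.mpr (hgrad _ (hmap 0 ⟨le_rfl, le_trans hs.1 hs.2⟩)))]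
  have h0 : ‖gradient u (φ 0)‖ ≠ 0 := hnne 0 ⟨le_rfl, le_trans hs.1 hs.2⟩
  rw [mul_div_cancel₀ _ h0]
end
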